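/- The 2-adic extension T₂ of the 3x+1 function is topologically and metrically conjugate to the 2-adic shift map: there exists a homeomorphism Φ : ℤ₂ → ℤ₂ which preserves the normalized Haar measure and satisfies T₂(Φ(x)) = Φ(S(x)) for all x ∈ ℤ₂, where S : ℤ₂ → ℤ₂ is the shift map defined by 2·S(x) = x if 2 divides x and 2·S(x) = x − 1 otherwise. -/

import Mathlib

open MeasureTheory

noncomputable instance : MeasurableSpace ℤ_[2] := borel _
instance : BorelSpace ℤ_[2] := ⟨rfl⟩

section AuxCollatzConj
open PadicInt


open Classical in
noncomputable def cbit (x : ℤ_[2]) : ℤ_[2] := if (2:ℤ_[2]) ∣ x then 0 else 1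

lemma two_ne' : (2:ℤ_[2]) ≠ 0 := two_ne_zero

lemma dvd_iff_norm_le {x : ℤ_[2]} {n : ℕ} :
    (2:ℤ_[2])^n ∣ x ↔ ‖x‖ ≤ ((2:ℕ):ℝ)^(-(n:ℤ)) := by
  rw [PadicInt.norm_le_pow_iff_mem_span_pow, Ideal.mem_span_singleton]
  norm_num

lemma norm_cbit_le (x : ℤ_[2]) : ‖cbit x‖ ≤ 1 := by
  unfold cbit; split <;> simp

lemma not_two_dvd_one : ¬ (2:ℤ_[2]) ∣ 1 := by
  intro h
  have := (dvd_iff_norm_le (x := (1:ℤ_[2])) (n := 1)).mp (by simpa using h)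
  simp at this
  norm_num at this

lemma cbit_eq_zero {x : ℤ_[2]} (h : (2:ℤ_[2]) ∣ x) : cbit x = 0 := by simp [cbit, h]
lemma cbit_eq_one {x : ℤ_[2]} (h : ¬(2:ℤ_[2]) ∣ x) : cbit x = 1 := by simp [cbit, h]

lemma cbit_eq_cbit {x y : ℤ_[2]} (h : (2:ℤ_[2]) ∣ x ↔ (2:ℤ_[2]) ∣ y) : cbit x = cbit y := by
  by_cases hx : (2:ℤ_[2]) ∣ x
  · rw [cbit_eq_zero hx, cbit_eq_zero (h.mp hx)]
  · rw [cbit_eq_one hx, cbit_eq_one (fun hy => hx (h.mpr hy))]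

lemma dvd_of_cbit_eq {x y : ℤ_[2]} (h : cbit x = cbit y) : ((2:ℤ_[2]) ∣ x ↔ (2:ℤ_[2]) ∣ y) := by
  by_cases hx : (2:ℤ_[2]) ∣ x <;> by_cases hy : (2:ℤ_[2]) ∣ y <;>
    simp [cbit, hx, hy] at h ⊢

noncomputable def Qm (T : ℤ_[2] → ℤ_[2]) (x : ℤ_[2]) : ℤ_[2] :=
  ∑' k : ℕ, cbit (T^[k] x) * 2^k

lemma summableQ (T : ℤ_[2] → ℤ_[2]) (x : ℤ_[2]) :
    Summable (fun k : ℕ => cbit (T^[k] x) * 2^k) := by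
  apply Summable.of_norm_bounded (g := fun k : ℕ => (2⁻¹:ℝ)^k)
  · exact summable_geometric_of_lt_one (by norm_num) (by norm_num)
  · intro k
    calc ‖cbit (T^[k] x) * 2^k‖ = ‖cbit (T^[k] x)‖ * ‖(2:ℤ_[2])^k‖ := norm_mul _ _
    _ ≤ 1 * ‖(2:ℤ_[2])^k‖ := by
        exact mul_le_mul_of_nonneg_right (norm_cbit_le _) (norm_nonneg _)
    _ = (2⁻¹:ℝ)^k := by
        rw [one_mul]
        have : ‖(2:ℤ_[2])^k‖ = ‖(2:ℤ_[2])‖^k := by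
          induction k with
          | zero => simp
          | succ n ih => rw [pow_succ, norm_mul, ih, pow_succ]
        rw [this]
        congr 1
        have := PadicInt.norm_p (p := 2)
        norm_num at this ⊢
        exact this

lemma Qm_rec (T : ℤ_[2] → ℤ_[2]) (x : ℤ_[2]) : Qm T x = cbit x + 2 * Qm T (T x) := by
  rw [Qm, Summable.tsum_eq_zero_add (summableQ T x)]
  simp only [Function.iterate_zero_apply, pow_zero, mul_one]
  congr 1
  rw [Qm, ← (summableQ T (T x)).tsum_mul_left 2]
  congr 1
  funext k
  rw [Function.iterate_succ_apply, pow_succ]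
  ring

section
variable {T : ℤ_[2] → ℤ_[2]}
  (hTe : ∀ x : ℤ_[2], 2 ∣ x → 2 * T x = x)
  (hTo : ∀ x : ℤ_[2], ¬ (2 ∣ x) → 2 * T x = 3 * x + 1)

lemma isUnit_three : IsUnit (3:ℤ_[2]) := by
  rw [PadicInt.isUnit_iff]
  refine le_antisymm (PadicInt.norm_le_one _) ?_
  by_contra h
  push_neg at h
  have h3 : (2:ℤ_[2]) ∣ 3 := by
    have := (PadicInt.norm_lt_one_iff_dvd (3:ℤ_[2])).mp h
    simpa using this
  obtain ⟨c, hc⟩ := h3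
  exact not_two_dvd_one ⟨c - 1, by linear_combination hc⟩

include hTe hTo in
lemma step_dvd {n : ℕ} {x y : ℤ_[2]} (h : (2:ℤ_[2])^(n+1) ∣ x - y) :
    cbit x = cbit y ∧ (2:ℤ_[2])^n ∣ T x - T y := by
  have h2 : (2:ℤ_[2]) ∣ x - y := dvd_trans ⟨2^n, by ring⟩ h
  obtain ⟨w, hw⟩ := h2
  have hpar : (2:ℤ_[2]) ∣ x ↔ (2:ℤ_[2]) ∣ y := by
    constructor
    · rintro ⟨c, hc⟩; exact ⟨c - w, by linear_combination hc - hw⟩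
    · rintro ⟨c, hc⟩; exact ⟨c + w, by linear_combination hc + hw⟩
  refine ⟨cbit_eq_cbit hpar, ?_⟩
  obtain ⟨c, hc⟩ := h
  by_cases hx : (2:ℤ_[2]) ∣ x
  · have hy := hpar.mp hx
    refine ⟨c, mul_left_cancel₀ two_ne' ?_⟩
    rw [mul_sub, hTe x hx, hTe y hy, hc]; ring
  · have hy := fun hy => hx (hpar.mpr hy)
    refine ⟨3 * c, mul_left_cancel₀ two_ne' ?_⟩
    rw [mul_sub, hTo x hx, hTo y hy]
    linear_combination 3 * hc

include hTe hTo in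
lemma step_dvd' {n : ℕ} {x y : ℤ_[2]} (hb : cbit x = cbit y)
    (h : (2:ℤ_[2])^n ∣ T x - T y) : (2:ℤ_[2])^(n+1) ∣ x - y := by
  obtain ⟨c, hc⟩ := h
  have hpar := dvd_of_cbit_eq hb
  by_cases hx : (2:ℤ_[2]) ∣ x
  · have hy := hpar.mp hx
    refine ⟨c, ?_⟩
    have h1 := hTe x hx
    have h2 := hTe y hy
    linear_combination 2 * hc - h1 + h2
  · have hy := fun hy => hx (hpar.mpr hy)
    have h1 := hTo x hx
    have h2 := hTo y hy
    have h3 : (2:ℤ_[2])^(n+1) ∣ 3 * (x - y) :=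
      ⟨c, by linear_combination 2 * hc - h1 + h2⟩
    exact (isUnit_three.dvd_mul_left).mp h3

lemma two_dvd_Qm_sub_cbit (T : ℤ_[2] → ℤ_[2]) (x : ℤ_[2]) :
    (2:ℤ_[2]) ∣ Qm T x - cbit x := by
  rw [Qm_rec T x]; exact ⟨Qm T (T x), by ring⟩

include hTe hTo in
lemma Qm_dvd_iff (n : ℕ) (x y : ℤ_[2]) :
    (2:ℤ_[2])^n ∣ Qm T x - Qm T y ↔ (2:ℤ_[2])^n ∣ x - y := by
  induction n generalizing x y with
  | zero => simp
  | succ n ih =>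
    constructor
    · intro h
      have h2 : (2:ℤ_[2]) ∣ Qm T x - Qm T y := dvd_trans ⟨2^n, by ring⟩ h
      obtain ⟨w, hw⟩ := h2
      obtain ⟨u, hu⟩ := two_dvd_Qm_sub_cbit T x
      obtain ⟨v, hv⟩ := two_dvd_Qm_sub_cbit T y
      have hd : (2:ℤ_[2]) ∣ cbit x - cbit y :=
        ⟨w - u + v, by linear_combination hw - hu + hv⟩
      have hb : cbit x = cbit y := by
        by_cases hx : (2:ℤ_[2]) ∣ x <;> by_cases hy : (2:ℤ_[2]) ∣ y
        · rw [cbit_eq_zero hx, cbit_eq_zero hy]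
        · rw [cbit_eq_zero hx, cbit_eq_one hy] at hd
          exact absurd (by simpa using hd) not_two_dvd_one
        · rw [cbit_eq_one hx, cbit_eq_zero hy] at hd
          exact absurd (by simpa using hd) not_two_dvd_one
        · rw [cbit_eq_one hx, cbit_eq_one hy]
      have heq : Qm T x - Qm T y = 2 * (Qm T (T x) - Qm T (T y)) := by
        rw [Qm_rec T x, Qm_rec T y, hb]; ring
      have hq : (2:ℤ_[2])^n ∣ Qm T (T x) - Qm T (T y) := by
        obtain ⟨c, hc⟩ := h
        refine ⟨c, mul_left_cancel₀ two_ne' ?_⟩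
        rw [← heq, hc]; ring
      exact step_dvd' hTe hTo hb ((ih _ _).mp hq)
    · intro h
      obtain ⟨hb, hd⟩ := step_dvd hTe hTo h
      obtain ⟨c, hc⟩ := (ih _ _).mpr hd
      refine ⟨c, ?_⟩
      rw [Qm_rec T x, Qm_rec T y, hb]
      linear_combination 2 * hc

end

lemma eq_zero_of_forall_dvd {b : ℤ_[2]} (h : ∀ n : ℕ, (2:ℤ_[2])^n ∣ b) : b = 0 := by
  have hle : ∀ n : ℕ, ‖b‖ ≤ ((2:ℕ):ℝ)^(-(n:ℤ)) := fun n => dvd_iff_norm_le.mp (h n)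
  have htend : Filter.Tendsto (fun n : ℕ => ((2:ℕ):ℝ)^(-(n:ℤ))) Filter.atTop (nhds 0) := by
    simp only [zpow_neg, zpow_natCast]
    exact tendsto_inv_atTop_zero.comp (tendsto_pow_atTop_atTop_of_one_lt (by norm_num))
  have : ‖b‖ ≤ 0 := ge_of_tendsto' htend hle
  simpa using le_antisymm this (norm_nonneg _)

lemma exists_norm_eq2 {a : ℤ_[2]} (ha : a ≠ 0) : ∃ n : ℕ, ‖a‖ = ((2:ℕ):ℝ)^(-(n:ℤ)) := by
  refine ⟨a.valuation, ?_⟩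
  rw [PadicInt.norm_eq_zpow_neg_valuation ha]

lemma norm_eq_of_dvd_iff {a b : ℤ_[2]}
    (h : ∀ n : ℕ, ((2:ℤ_[2])^n ∣ a ↔ (2:ℤ_[2])^n ∣ b)) : ‖a‖ = ‖b‖ := by
  by_cases ha : a = 0
  · subst ha
    have : b = 0 := eq_zero_of_forall_dvd (fun n => (h n).mp (dvd_zero _))
    simp [this]
  by_cases hb : b = 0
  · subst hb
    have : a = 0 := eq_zero_of_forall_dvd (fun n => (h n).mpr (dvd_zero _))
    simp [this]
  obtain ⟨n, hn⟩ := exists_norm_eq2 ha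
  obtain ⟨m, hm⟩ := exists_norm_eq2 hb
  have h1 : ‖b‖ ≤ ‖a‖ := by
    rw [hn]
    exact dvd_iff_norm_le.mp ((h n).mp (dvd_iff_norm_le.mpr hn.le))
  have h2 : ‖a‖ ≤ ‖b‖ := by
    rw [hm]
    exact dvd_iff_norm_le.mp ((h m).mpr (dvd_iff_norm_le.mpr hm.le))
  exact le_antisymm h2 h1

section
variable {T : ℤ_[2] → ℤ_[2]}
  (hTe : ∀ x : ℤ_[2], 2 ∣ x → 2 * T x = x)
  (hTo : ∀ x : ℤ_[2], ¬ (2 ∣ x) → 2 * T x = 3 * x + 1)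

include hTe hTo in
lemma Qm_isometry : Isometry (Qm T) := by
  apply Isometry.of_dist_eq
  intro x y
  rw [dist_eq_norm, dist_eq_norm]
  exact norm_eq_of_dvd_iff (fun n => Qm_dvd_iff hTe hTo n x y)

lemma toZModPow_eq_zero_iff (n : ℕ) (z : ℤ_[2]) :
    PadicInt.toZModPow n z = 0 ↔ (2:ℤ_[2])^n ∣ z := by
  rw [← RingHom.mem_ker, PadicInt.ker_toZModPow, Ideal.mem_span_singleton]
  norm_num

lemma toZModPow_eq_iff (n : ℕ) (z w : ℤ_[2]) :
    PadicInt.toZModPow n z = PadicInt.toZModPow n w ↔ (2:ℤ_[2])^n ∣ z - w := by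
  rw [← toZModPow_eq_zero_iff, map_sub, sub_eq_zero]

include hTe hTo in
lemma Qm_approx (n : ℕ) (y : ℤ_[2]) : ∃ x : ℤ_[2], (2:ℤ_[2])^n ∣ Qm T x - y := by
  haveI : NeZero ((2:ℕ)^n) := ⟨pow_ne_zero n two_ne_zero⟩
  set f : ZMod (2^n) → ZMod (2^n) :=
    fun a => PadicInt.toZModPow n (Qm T ((a.val : ℕ) : ℤ_[2])) with hf
  have hinj : Function.Injective f := by
    intro a b hab
    have h1 : (2:ℤ_[2])^n ∣ Qm T ((a.val : ℕ) : ℤ_[2]) - Qm T ((b.val : ℕ) : ℤ_[2]) :=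
      (toZModPow_eq_iff n _ _).mp hab
    have h2 : (2:ℤ_[2])^n ∣ ((a.val : ℕ) : ℤ_[2]) - ((b.val : ℕ) : ℤ_[2]) :=
      (Qm_dvd_iff hTe hTo n _ _).mp h1
    have h3 : PadicInt.toZModPow n (((a.val : ℕ) : ℤ_[2])) =
        PadicInt.toZModPow n (((b.val : ℕ) : ℤ_[2])) := (toZModPow_eq_iff n _ _).mpr h2
    rw [map_natCast, map_natCast] at h3
    rwa [ZMod.natCast_val, ZMod.natCast_val, ZMod.cast_id, ZMod.cast_id] at h3
  have hsurj : Function.Surjective f := Finite.surjective_of_injective hinj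
  obtain ⟨a, ha⟩ := hsurj (PadicInt.toZModPow n y)
  exact ⟨((a.val : ℕ) : ℤ_[2]), (toZModPow_eq_iff n _ _).mp ha⟩

include hTe hTo in
lemma Qm_surjective : Function.Surjective (Qm T) := by
  have hcont : Continuous (Qm T) := (Qm_isometry hTe hTo).continuous
  have hclosed : IsClosed (Set.range (Qm T)) := (isCompact_range hcont).isClosed
  intro y
  have hy : y ∈ closure (Set.range (Qm T)) := by
    rw [Metric.mem_closure_iff]
    intro ε hε
    obtain ⟨n, hn⟩ := exists_pow_lt_of_lt_one hε (show (2⁻¹:ℝ) < 1 by norm_num)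
    obtain ⟨x, hx⟩ := Qm_approx hTe hTo n y
    refine ⟨Qm T x, Set.mem_range_self x, ?_⟩
    rw [dist_comm, dist_eq_norm]
    calc ‖Qm T x - y‖ ≤ ((2:ℕ):ℝ)^(-(n:ℤ)) := dvd_iff_norm_le.mp hx
    _ = (2⁻¹:ℝ)^n := by rw [zpow_neg, zpow_natCast, ← inv_pow]; norm_num
    _ < ε := hn
  rwa [hclosed.closure_eq] at hy

end

lemma two_dvd_Qm_iff (T : ℤ_[2] → ℤ_[2]) (x : ℤ_[2]) :
    (2:ℤ_[2]) ∣ Qm T x ↔ (2:ℤ_[2]) ∣ x := by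
  obtain ⟨u, hu⟩ := two_dvd_Qm_sub_cbit T x
  constructor
  · intro h
    by_contra hx
    rw [cbit_eq_one hx] at hu
    obtain ⟨c, hc⟩ := h
    exact not_two_dvd_one ⟨c - u, by linear_combination hc - hu⟩
  · intro hx
    rw [cbit_eq_zero hx] at hu
    exact ⟨u, by linear_combination hu⟩

section
variable {T S : ℤ_[2] → ℤ_[2]}

lemma Qm_conj
    (hSe : ∀ x : ℤ_[2], 2 ∣ x → 2 * S x = x)
    (hSo : ∀ x : ℤ_[2], ¬ (2 ∣ x) → 2 * S x = x - 1)
    (x : ℤ_[2]) : S (Qm T x) = Qm T (T x) := by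
  by_cases hx : (2:ℤ_[2]) ∣ x
  · have h1 := hSe (Qm T x) ((two_dvd_Qm_iff T x).mpr hx)
    have h2 := Qm_rec T x
    rw [cbit_eq_zero hx] at h2
    exact mul_left_cancel₀ two_ne' (by linear_combination h1 + h2)
  · have h1 := hSo (Qm T x) (fun h => hx ((two_dvd_Qm_iff T x).mp h))
    have h2 := Qm_rec T x
    rw [cbit_eq_one hx] at h2
    exact mul_left_cancel₀ two_ne' (by linear_combination h1 + h2)

end

/-- the cylinder sets -/
def Cyl : Set (Set ℤ_[2]) :=
  {s | ∃ (n : ℕ) (a : ZMod (2^n)), s = PadicInt.toZModPow n ⁻¹' {a}}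

lemma isOpen_cyl (n : ℕ) (a : ZMod (2^n)) :
    IsOpen (PadicInt.toZModPow n ⁻¹' {a} : Set ℤ_[2]) := by
  rw [Metric.isOpen_iff]
  intro x hx
  refine ⟨((2:ℕ):ℝ)^(-(n:ℤ)), by positivity, ?_⟩
  intro y hy
  rw [Metric.mem_ball, dist_eq_norm] at hy
  have : PadicInt.toZModPow n y = PadicInt.toZModPow n x :=
    (toZModPow_eq_iff n _ _).mpr (dvd_iff_norm_le.mpr hy.le)
  simp only [Set.mem_preimage, Set.mem_singleton_iff] at hx ⊢
  rw [this, hx]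

lemma cyl_subset {n m : ℕ} (hnm : n ≤ m) {a : ZMod (2^n)} {b : ZMod (2^m)}
    {x : ℤ_[2]} (hxa : PadicInt.toZModPow n x = a) (hxb : PadicInt.toZModPow m x = b) :
    (PadicInt.toZModPow m ⁻¹' {b} : Set ℤ_[2]) ⊆ PadicInt.toZModPow n ⁻¹' {a} := by
  intro y hy
  simp only [Set.mem_preimage, Set.mem_singleton_iff] at hy ⊢
  have hc := PadicInt.zmod_cast_comp_toZModPow (p := 2) n m hnm
  have h1 := RingHom.congr_fun hc y
  have h2 := RingHom.congr_fun hc x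
  simp only [RingHom.comp_apply] at h1 h2
  rw [← h1, hy, ← hxb, h2, hxa]

lemma isPiSystem_cyl : IsPiSystem Cyl := by
  rintro s ⟨n, a, rfl⟩ t ⟨m, b, rfl⟩ hne
  obtain ⟨x, hxa, hxb⟩ := hne
  simp only [Set.mem_preimage, Set.mem_singleton_iff] at hxa hxb
  rcases le_total n m with h | h
  · rw [Set.inter_eq_self_of_subset_right (cyl_subset h hxa hxb)]
    exact ⟨m, b, rfl⟩
  · rw [Set.inter_eq_self_of_subset_left (cyl_subset h hxb hxa)]
    exact ⟨n, a, rfl⟩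

lemma isBasis_cyl : TopologicalSpace.IsTopologicalBasis Cyl := by
  apply TopologicalSpace.isTopologicalBasis_of_isOpen_of_nhds
  · rintro u ⟨n, a, rfl⟩; exact isOpen_cyl n a
  · intro x u hxu hu
    obtain ⟨ε, hε, hball⟩ := Metric.isOpen_iff.mp hu x hxu
    obtain ⟨n, hn⟩ := exists_pow_lt_of_lt_one hε (show (2⁻¹:ℝ) < 1 by norm_num)
    refine ⟨PadicInt.toZModPow n ⁻¹' {PadicInt.toZModPow n x}, ⟨n, _, rfl⟩, rfl, ?_⟩
    intro y hy
    simp only [Set.mem_preimage, Set.mem_singleton_iff] at hy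
    apply hball
    rw [Metric.mem_ball, dist_eq_norm]
    calc ‖y - x‖ ≤ ((2:ℕ):ℝ)^(-(n:ℤ)) := dvd_iff_norm_le.mp ((toZModPow_eq_iff n _ _).mp hy)
    _ = (2⁻¹:ℝ)^n := by rw [zpow_neg, zpow_natCast, ← inv_pow]; norm_num
    _ < ε := hn


lemma measure_cyl (μ : Measure ℤ_[2]) [μ.IsAddLeftInvariant] (n : ℕ) (a b : ZMod (2^n)) :
    μ (PadicInt.toZModPow n ⁻¹' {a}) = μ (PadicInt.toZModPow n ⁻¹' {b}) := by
  haveI : NeZero ((2:ℕ)^n) := ⟨pow_ne_zero n two_ne_zero⟩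
  set ca : ℤ_[2] := ((a.val : ℕ) : ℤ_[2]) with hca'
  set cb : ℤ_[2] := ((b.val : ℕ) : ℤ_[2]) with hcb'
  have hca : PadicInt.toZModPow n ca = a := by
    rw [hca', map_natCast, ZMod.natCast_val, ZMod.cast_id]
  have hcb : PadicInt.toZModPow n cb = b := by
    rw [hcb', map_natCast, ZMod.natCast_val, ZMod.cast_id]
  have hset : (PadicInt.toZModPow n ⁻¹' {a} : Set ℤ_[2])
      = (fun x => (cb - ca) + x) ⁻¹' (PadicInt.toZModPow n ⁻¹' {b}) := by
    ext x
    simp only [Set.mem_preimage, Set.mem_singleton_iff, map_add, map_sub, hca, hcb]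
    constructor
    · intro h; rw [h]; ring
    · intro h; linear_combination h
  rw [hset, measure_preimage_add]


end AuxCollatzConj

/-- The 2-adic extension `T₂` of the 3x+1 function is topologically and metrically
conjugate to the 2-adic shift map `S`: there is a Haar-measure-preserving
homeomorphism `Φ` of `ℤ₂` with `T₂ ∘ Φ = Φ ∘ S`. -/
theorem two_adic_extension_conjugate_to_shift (T₂ S : ℤ_[2] → ℤ_[2])
    (hTodd : ∀ x : ℤ_[2], ¬ (2 ∣ x) → 2 * T₂ x = 3 * x + 1)
    (hTeven : ∀ x : ℤ_[2], 2 ∣ x → 2 * T₂ x = x)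
    (hSeven : ∀ x : ℤ_[2], 2 ∣ x → 2 * S x = x)
    (hSodd : ∀ x : ℤ_[2], ¬ (2 ∣ x) → 2 * S x = x - 1)
    (μ : Measure ℤ_[2]) [μ.IsAddHaarMeasure] [IsProbabilityMeasure μ] :
    ∃ Φ : ℤ_[2] ≃ₜ ℤ_[2], MeasurePreserving Φ μ μ ∧ ∀ x : ℤ_[2], T₂ (Φ x) = Φ (S x) := by
  have hinj : Function.Injective (Qm T₂) := (Qm_isometry hTeven hTodd).injective
  have hsurj : Function.Surjective (Qm T₂) := Qm_surjective hTeven hTodd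
  let e : ℤ_[2] ≃ ℤ_[2] := Equiv.ofBijective _ ⟨hinj, hsurj⟩
  let iso : ℤ_[2] ≃ᵢ ℤ_[2] := ⟨e, Qm_isometry hTeven hTodd⟩
  have hmeas : Measurable (Qm T₂) := (Qm_isometry hTeven hTodd).continuous.measurable
  haveI : IsProbabilityMeasure (Measure.map (Qm T₂) μ) :=
    Measure.isProbabilityMeasure_map hmeas.aemeasurable
  have hmap : Measure.map (Qm T₂) μ = μ := by
    refine ext_of_generate_finite Cyl ?_ isPiSystem_cyl ?_ ?_
    · rw [BorelSpace.measurable_eq (α := ℤ_[2])]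
      exact isBasis_cyl.borel_eq_generateFrom
    · rintro s ⟨n, a, rfl⟩
      haveI : NeZero ((2:ℕ)^n) := ⟨pow_ne_zero n two_ne_zero⟩
      obtain ⟨x₀, hx₀⟩ := hsurj (((a.val : ℕ) : ℤ_[2]))
      have hQx₀ : PadicInt.toZModPow n (Qm T₂ x₀) = a := by
        rw [hx₀, map_natCast, ZMod.natCast_val, ZMod.cast_id]
      have hpre : (Qm T₂) ⁻¹' (PadicInt.toZModPow n ⁻¹' {a})
          = PadicInt.toZModPow n ⁻¹' {PadicInt.toZModPow n x₀} := by
        ext x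
        simp only [Set.mem_preimage, Set.mem_singleton_iff]
        rw [← hQx₀, toZModPow_eq_iff, toZModPow_eq_iff, Qm_dvd_iff hTeven hTodd]
      rw [Measure.map_apply hmeas (isOpen_cyl n a).measurableSet, hpre]
      exact measure_cyl μ n _ a
    · simp [measure_univ]
  refine ⟨iso.symm.toHomeomorph, ?_, ?_⟩
  · have hQpres : MeasurePreserving (⇑(iso.toHomeomorph.toMeasurableEquiv)) μ μ :=
      ⟨(iso.toHomeomorph.toMeasurableEquiv).measurable, hmap⟩
    exact hQpres.symm iso.toHomeomorph.toMeasurableEquiv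
  · intro y
    apply hinj
    have h1 : ∀ z, Qm T₂ (iso.symm.toHomeomorph z) = z := fun z => iso.apply_symm_apply z
    rw [← Qm_conj hSeven hSodd, h1, h1]
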